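/- Let c > 0, p > 0, and let φ : ℝ → ℝ be a nonconstant, everywhere positive, periodic, twice continuously differentiable solution of -φ'' + cφ - φ^{p+1}/(p+1) = 0 with minimal period L and energy E(φ, φ') ≡ B. Set b₁ = min_{x∈[0,L]} φ(x) and b₂ = max_{x∈[0,L]} φ(x). Then L = 2 ∫_{b₁}^{b₂} dh / √( -2h^{p+2}/((p+1)(p+2)) + ch² + 2B ), where the (improper) integral converges. -/

import Mathlib

open Set MeasureTheory Filter

theorem my_ode_unique {G : ℝ → ℝ} {K : NNReal} (hG : LipschitzWith K G)
    (f₁ d₁ f₂ d₂ : ℝ → ℝ)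
    (hf₁ : ∀ x, HasDerivAt f₁ (d₁ x) x) (hd₁ : ∀ x, HasDerivAt d₁ (G (f₁ x)) x)
    (hf₂ : ∀ x, HasDerivAt f₂ (d₂ x) x) (hd₂ : ∀ x, HasDerivAt d₂ (G (f₂ x)) x)
    (t₀ : ℝ) (h0 : f₁ t₀ = f₂ t₀) (h0' : d₁ t₀ = d₂ t₀) :
    ∀ t, f₁ t = f₂ t := by
  set v : ℝ → ℝ × ℝ → ℝ × ℝ := fun _ y => (y.2, G y.1) with hvdef
  have hv : ∀ t, LipschitzWith (max 1 K) (v t) := by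
    intro t
    exact LipschitzWith.prodMk (LipschitzWith.prod_snd)
      (by simpa [Function.comp_def] using hG.comp LipschitzWith.prod_fst)
  intro t
  set F₁ : ℝ → ℝ × ℝ := fun s => (f₁ s, d₁ s) with hF₁
  set F₂ : ℝ → ℝ × ℝ := fun s => (f₂ s, d₂ s) with hF₂
  have hF₁' : ∀ s, HasDerivAt F₁ (v s (F₁ s)) s := fun s => (hf₁ s).prodMk (hd₁ s)
  have hF₂' : ∀ s, HasDerivAt F₂ (v s (F₂ s)) s := fun s => (hf₂ s).prodMk (hd₂ s)
  have key : F₁ t = F₂ t := by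
    have hmem : t₀ ∈ Ioo (min t t₀ - 1) (max t t₀ + 1) := by
      constructor
      · have := min_le_right t t₀; linarith
      · have := le_max_right t t₀; linarith
    have := ODE_solution_unique_of_mem_Icc (s := fun _ => (univ : Set (ℝ × ℝ)))
      (fun s _ => (hv s).lipschitzOnWith) hmem
      (fun x _ => (hF₁' x).continuousAt.continuousWithinAt)
      (fun x _ => hF₁' x) (fun _ _ => trivial)
      (fun x _ => (hF₂' x).continuousAt.continuousWithinAt)
      (fun x _ => hF₂' x) (fun _ _ => trivial)
      (by simp [hF₁, hF₂, h0, h0'])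
    apply this
    constructor
    · have := min_le_left t t₀; linarith
    · have := le_max_left t t₀; linarith
  exact congrArg Prod.fst key

/-- For a nonconstant, positive, periodic C² solution φ with minimal period L
and energy ≡ B, setting b₁ = min φ on [0,L] and b₂ = max φ on [0,L], the minimal period is
given by L = 2 ∫_{b₁}^{b₂} dh / √(-2h^{p+2}/((p+1)(p+2)) + ch² + 2B), the improper integral
being convergent. -/
theorem stmt_4 (c p : ℝ) (hc : 0 < c) (hp : 0 < p) (φ : ℝ → ℝ) (L B : ℝ)
    (hφ : ContDiff ℝ 2 φ) (hpos : ∀ x, 0 < φ x)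
    (hL : 0 < L) (hper : Function.Periodic φ L)
    (hmin : ∀ L', 0 < L' → Function.Periodic φ L' → L ≤ L')
    (hnc : ∃ x y, φ x ≠ φ y)
    (hode : ∀ x, -(deriv (deriv φ) x) + c * φ x - φ x ^ (p + 1) / (p + 1) = 0)
    (hE : ∀ x, (deriv φ x) ^ 2 / 2 - c * (φ x) ^ 2 / 2
      + φ x ^ (p + 2) / ((p + 1) * (p + 2)) = B)
    (b₁ b₂ : ℝ) (hb₁ : b₁ = sInf (φ '' Set.Icc 0 L)) (hb₂ : b₂ = sSup (φ '' Set.Icc 0 L)) :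
    MeasureTheory.IntegrableOn
      (fun h => 1 / Real.sqrt (-(2 * h ^ (p + 2)) / ((p + 1) * (p + 2)) + c * h ^ 2 + 2 * B))
      (Set.Ioo b₁ b₂) ∧
    L = 2 * ∫ h in Set.Ioo b₁ b₂,
        1 / Real.sqrt (-(2 * h ^ (p + 2)) / ((p + 1) * (p + 2)) + c * h ^ 2 + 2 * B) := by
  have hp1 : (0:ℝ) < p + 1 := by linarith
  have hp2 : (0:ℝ) < p + 2 := by linarith
  -- differentiability
  have hφ2 : ContDiff ℝ (1+1) φ := by norm_num; exact hφ
  have hφd : Differentiable ℝ φ := hφ.differentiable (by norm_num)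
  have hcont : Continuous φ := hφd.continuous
  have hφ1 : ContDiff ℝ 1 (deriv φ) := (contDiff_succ_iff_deriv.mp hφ2).2.2
  have hφ'd : Differentiable ℝ (deriv φ) := hφ1.differentiable one_ne_zero
  have hφ'cont : Continuous (deriv φ) := hφ'd.continuous
  have hD1 : ∀ x, HasDerivAt φ (deriv φ x) x := fun x => (hφd x).hasDerivAt
  have hD2 : ∀ x, HasDerivAt (deriv φ) (deriv (deriv φ) x) x := fun x => (hφ'd x).hasDerivAt
  -- ODE rewrite
  set g : ℝ → ℝ := fun h => c * h - h ^ (p+1) / (p+1) with hgdef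
  have hode' : ∀ x, deriv (deriv φ) x = g (φ x) := by
    intro x; have := hode x; simp only [hgdef]; linarith
  -- energy rewrite
  set Fn : ℝ → ℝ := fun h => -(2 * h ^ (p + 2)) / ((p + 1) * (p + 2)) + c * h ^ 2 + 2 * B
    with hFdef
  have hE' : ∀ x, (deriv φ x) ^ 2 = Fn (φ x) := by
    intro x
    have h0 := hE x
    simp only [hFdef]
    have hne : (p+1)*(p+2) ≠ 0 := by positivity
    field_simp at h0 ⊢
    linarith
  -- min and max attained
  have hIccne : (Set.Icc (0:ℝ) L).Nonempty := ⟨0, by constructor <;> linarith⟩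
  obtain ⟨x₁, hx₁I, hx₁min⟩ := isCompact_Icc.exists_isMinOn hIccne hcont.continuousOn
  obtain ⟨xM, hxMI, hxMmax⟩ := isCompact_Icc.exists_isMaxOn hIccne hcont.continuousOn
  have hb₁x : φ x₁ = b₁ := by
    rw [hb₁]
    exact (IsLeast.csInf_eq ⟨mem_image_of_mem φ hx₁I, by
      rintro _ ⟨y, hy, rfl⟩; exact hx₁min hy⟩).symm
  have hb₂x : φ xM = b₂ := by
    rw [hb₂]
    exact (IsGreatest.csSup_eq ⟨mem_image_of_mem φ hxMI, by
      rintro _ ⟨y, hy, rfl⟩; exact hxMmax hy⟩).symm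
  -- range
  have hrange : ∀ x, φ x ∈ Set.Icc b₁ b₂ := by
    intro x
    obtain ⟨y, hy, hxy⟩ := hper.exists_mem_Ico₀ hL x
    have hyI : y ∈ Set.Icc 0 L := ⟨hy.1, hy.2.le⟩
    exact ⟨hxy ▸ (hb₁x ▸ hx₁min hyI), hxy ▸ (hb₂x ▸ hxMmax hyI)⟩
  have hb12 : b₁ < b₂ := by
    rcases lt_or_ge b₁ b₂ with h | h
    · exact h
    · exfalso
      obtain ⟨x, y, hxy⟩ := hnc
      have h1 := hrange x
      have h2 := hrange y
      apply hxy
      have : b₁ = b₂ := le_antisymm (hb₁x ▸ hb₂x ▸ hx₁min hxMI) h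
      rw [this] at h1 h2
      cases' h1 with h1a h1b; cases' h2 with h2a h2b; linarith
  have hb₁pos : 0 < b₁ := hb₁x ▸ hpos x₁
  have hb₂pos : 0 < b₂ := lt_trans hb₁pos hb12
  -- derivative vanishes at global extrema
  have hminglob : ∀ x, deriv φ x = 0 → True := fun _ _ => trivial
  have hd₁ : deriv φ x₁ = 0 := by
    have : IsLocalMin φ x₁ := Filter.Eventually.of_forall (fun x => hb₁x ▸ (hrange x).1)
    exact this.deriv_eq_zero
  have hdM : deriv φ xM = 0 := by
    have : IsLocalMax φ xM := Filter.Eventually.of_forall (fun x => hb₂x ▸ (hrange x).2)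
    exact this.deriv_eq_zero
  have hFb₁ : Fn b₁ = 0 := by rw [← hb₁x, ← hE' x₁, hd₁]; ring
  have hFb₂ : Fn b₂ = 0 := by rw [← hb₂x, ← hE' xM, hdM]; ring
  -- every value attained
  have hattain : ∀ h ∈ Set.Icc b₁ b₂, ∃ x, φ x = h := by
    intro h hh
    have : h ∈ Set.uIcc (φ x₁) (φ xM) := by
      rw [hb₁x, hb₂x, Set.uIcc_of_le hb12.le]; exact hh
    obtain ⟨x, _, hx⟩ := intermediate_value_uIcc (hcont.continuousOn) this
    exact ⟨x, hx⟩
  have hFnonneg : ∀ h ∈ Set.Icc b₁ b₂, 0 ≤ Fn h := by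
    intro h hh
    obtain ⟨x, rfl⟩ := hattain h hh
    rw [← hE' x]; positivity
  -- derivative of Fn
  have hFderiv : ∀ h : ℝ, 0 < h → HasDerivAt Fn (2 * g h) h := by
    intro h hh
    have h1 : HasDerivAt (fun x : ℝ => x ^ (p+2)) ((p+2) * h ^ (p+2-1)) h :=
      Real.hasDerivAt_rpow_const (Or.inl (ne_of_gt hh))
    have h2 : HasDerivAt (fun x : ℝ => x ^ 2) (2 * h) h := by
      simpa using hasDerivAt_pow 2 h
    have h3 : HasDerivAt Fn (-(2 * ((p+2) * h ^ (p+2-1))) / ((p+1)*(p+2)) + c * (2*h)) h := by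
      have := (((h1.const_mul 2).neg.div_const ((p+1)*(p+2))).add (h2.const_mul c)).add_const (2*B)
      simpa [hFdef, neg_div] using this
    convert h3 using 1
    have he : p + 2 - 1 = p + 1 := by ring
    rw [he]
    simp only [hgdef]
    field_simp
    ring
  -- clamped nonlinearity and its Lipschitz property
  set clamp : ℝ → ℝ := fun h => max b₁ (min h b₂) with hclampdef
  have hclampmem : ∀ h, clamp h ∈ Set.Icc b₁ b₂ := by
    intro h
    refine ⟨le_max_left _ _, ?_⟩
    simp only [hclampdef]
    rw [max_le_iff]
    exact ⟨hb12.le, min_le_right _ _⟩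
  have hclampeq : ∀ h ∈ Set.Icc b₁ b₂, clamp h = h := by
    intro h hh
    simp only [hclampdef]
    rw [min_eq_left hh.2, max_eq_right hh.1]
  have hclamplip : ∀ x y, |clamp x - clamp y| ≤ |x - y| := by
    intro x y
    simp only [hclampdef]
    calc |max b₁ (min x b₂) - max b₁ (min y b₂)|
        = |max (min x b₂) b₁ - max (min y b₂) b₁| := by rw [max_comm b₁, max_comm b₁]
      _ ≤ |min x b₂ - min y b₂| := abs_max_sub_max_le_abs _ _ _
      _ ≤ max |x - y| |b₂ - b₂| := abs_min_sub_min_le_max _ _ _ _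
      _ = |x - y| := by simp
  set r : ℝ → ℝ := fun t => t ^ (p+1) / (p+1) with hrdef
  have hrlip : ∀ x ∈ Set.Icc b₁ b₂, ∀ y ∈ Set.Icc b₁ b₂, |r y - r x| ≤ b₂ ^ p * |y - x| := by
    intro x hx y hy
    have key := Convex.norm_image_sub_le_of_norm_hasDerivWithin_le
      (f := r) (f' := fun t => t ^ p) (C := b₂ ^ p) (s := Set.Icc b₁ b₂) ?_ ?_ (convex_Icc _ _) hx hy
    · simpa [Real.norm_eq_abs] using key
    · intro t ht
      have htpos : (0:ℝ) < t := lt_of_lt_of_le hb₁pos ht.1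
      have h1 : HasDerivAt (fun x : ℝ => x ^ (p+1)) ((p+1) * t ^ (p+1-1)) t :=
        Real.hasDerivAt_rpow_const (Or.inl (ne_of_gt htpos))
      have h2 := (h1.div_const (p+1)).hasDerivWithinAt (s := Set.Icc b₁ b₂)
      simp only [hrdef]
      convert h2 using 1
      have hh : p + 1 - 1 = p := by ring
      rw [hh]
      field_simp
    · intro t ht
      have htpos : (0:ℝ) < t := lt_of_lt_of_le hb₁pos ht.1
      rw [Real.norm_eq_abs, abs_of_pos (Real.rpow_pos_of_pos htpos p)]
      exact Real.rpow_le_rpow htpos.le ht.2 hp.le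
  set G : ℝ → ℝ := fun h => c * h - r (clamp h) with hGdef
  have hGg : ∀ h ∈ Set.Icc b₁ b₂, G h = g h := by
    intro h hh
    simp only [hGdef, hgdef, hrdef, hclampeq h hh]
  set KG : NNReal := Real.toNNReal (c + b₂ ^ p) with hKGdef
  have hGlip : LipschitzWith KG G := by
    apply LipschitzWith.of_dist_le_mul
    intro x y
    have hKco : (KG : ℝ) = c + b₂ ^ p := Real.coe_toNNReal _ (by positivity)
    rw [hKco]
    simp only [Real.dist_eq, hGdef]
    have h1 : |r (clamp x) - r (clamp y)| ≤ b₂ ^ p * |clamp x - clamp y| := by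
      have := hrlip (clamp y) (hclampmem y) (clamp x) (hclampmem x)
      simpa using this
    have h2 := hclamplip x y
    have h3 : |c * x - c * y| = c * |x - y| := by rw [← mul_sub, abs_mul, abs_of_pos hc]
    have key : c * x - r (clamp x) - (c * y - r (clamp y))
        = (c * x - c * y) - (r (clamp x) - r (clamp y)) := by ring
    rw [key]
    have h4 : |(c * x - c * y) - (r (clamp x) - r (clamp y))|
        ≤ |c * x - c * y| + |r (clamp x) - r (clamp y)| := by
      rw [sub_eq_add_neg]
      exact (abs_add_le _ _).trans (by rw [abs_neg])
    have h5 : b₂ ^ p * |clamp x - clamp y| ≤ b₂ ^ p * |x - y| :=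
      mul_le_mul_of_nonneg_left h2 (by positivity)
    rw [h3] at h4
    nlinarith [abs_nonneg (x - y)]
  have hGode : ∀ x, HasDerivAt (deriv φ) (G (φ x)) x := by
    intro x
    rw [hGg (φ x) (hrange x), ← hode' x]
    exact hD2 x
  have huniq : ∀ (f₂ d₂ : ℝ → ℝ), (∀ x, HasDerivAt f₂ (d₂ x) x) →
      (∀ x, HasDerivAt d₂ (G (f₂ x)) x) → ∀ t₀, φ t₀ = f₂ t₀ → deriv φ t₀ = d₂ t₀ →
      ∀ t, φ t = f₂ t :=
    fun f₂ d₂ h1 h2 t₀ h3 h4 => my_ode_unique hGlip φ (deriv φ) f₂ d₂ hD1 hGode h1 h2 t₀ h3 h4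
  -- nondegeneracy
  have hgne : ∀ h₀, (∃ x₀, φ x₀ = h₀ ∧ deriv φ x₀ = 0) → g h₀ ≠ 0 := by
    rintro h₀ ⟨x₀, hx₀, hdx₀⟩ hg0
    have hmem : h₀ ∈ Set.Icc b₁ b₂ := hx₀ ▸ hrange x₀
    have hconst : ∀ t, φ t = h₀ :=
      huniq (fun _ => h₀) (fun _ => 0) (fun x => hasDerivAt_const x h₀)
        (fun x => by rw [hGg h₀ hmem, hg0]; exact hasDerivAt_const x (0:ℝ))
        x₀ hx₀ hdx₀
    have : φ x₁ = φ xM := (hconst x₁).trans (hconst xM).symm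
    rw [hb₁x, hb₂x] at this
    exact absurd this (ne_of_lt hb12)
  have hFpos : ∀ h ∈ Set.Ioo b₁ b₂, 0 < Fn h := by
    intro h₀ hh
    rcases lt_or_ge 0 (Fn h₀) with h | h
    · exact h
    exfalso
    have hIcc : h₀ ∈ Set.Icc b₁ b₂ := Set.Ioo_subset_Icc_self hh
    have hF0 : Fn h₀ = 0 := le_antisymm h (hFnonneg h₀ hIcc)
    obtain ⟨x₀, hx₀⟩ := hattain h₀ hIcc
    have hdx₀ : deriv φ x₀ = 0 := by
      have h5 := hE' x₀
      rw [hx₀, hF0] at h5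
      exact pow_eq_zero_iff (two_ne_zero) |>.mp h5
    have hlocmin : IsLocalMin Fn h₀ :=
      Filter.eventually_of_mem (Icc_mem_nhds hh.1 hh.2)
        (fun y hy => by rw [hF0]; exact hFnonneg y hy)
    have hder : deriv Fn h₀ = 2 * g h₀ := (hFderiv h₀ (lt_trans hb₁pos hh.1)).deriv
    have hz := hlocmin.deriv_eq_zero
    rw [hder] at hz
    exact hgne h₀ ⟨x₀, hx₀, hdx₀⟩ (by linarith)
  -- signs of g at the endpoints
  have hgb₁ : 0 < g b₁ := by
    have hne : g b₁ ≠ 0 := hgne b₁ ⟨x₁, hb₁x, hd₁⟩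
    rcases lt_or_ge 0 (g b₁) with h | h
    · exact h
    exfalso
    have hlt : 2 * g b₁ < 0 := by
      rcases lt_of_le_of_ne h hne with h'
      linarith
    have hslope : Filter.Tendsto (slope Fn b₁) (nhdsWithin b₁ {b₁}ᶜ) (nhds (2 * g b₁)) :=
      hasDerivAt_iff_tendsto_slope.mp (hFderiv b₁ hb₁pos)
    have h2 : Filter.Tendsto (slope Fn b₁) (nhdsWithin b₁ (Set.Ioi b₁)) (nhds (2 * g b₁)) :=
      hslope.mono_left (nhdsWithin_mono _ (fun y hy => ne_of_gt hy))
    have h3 : ∀ᶠ y in nhdsWithin b₁ (Set.Ioi b₁), slope Fn b₁ y < 0 :=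
      h2.eventually (gt_mem_nhds hlt)
    have h4 : ∀ᶠ y in nhdsWithin b₁ (Set.Ioi b₁), y ∈ Set.Ioo b₁ b₂ :=
      Filter.eventually_of_mem (Ioo_mem_nhdsGT_of_mem ⟨le_refl b₁, hb12⟩) (fun y hy => hy)
    obtain ⟨y, hy1, hy2⟩ := (h3.and h4).exists
    have hsl : slope Fn b₁ y = Fn y / (y - b₁) := by
      rw [slope_def_field, hFb₁, sub_zero]
    rw [hsl] at hy1
    have hFy := hFpos y hy2
    have hypos : 0 < y - b₁ := sub_pos.mpr hy2.1
    have := div_pos hFy hypos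
    linarith
  have hgb₂ : g b₂ < 0 := by
    have hne : g b₂ ≠ 0 := hgne b₂ ⟨xM, hb₂x, hdM⟩
    rcases lt_or_ge (g b₂) 0 with h | h
    · exact h
    exfalso
    have hslope : Filter.Tendsto (slope Fn b₂) (nhdsWithin b₂ {b₂}ᶜ) (nhds (2 * g b₂)) :=
      hasDerivAt_iff_tendsto_slope.mp (hFderiv b₂ hb₂pos)
    have h2 : Filter.Tendsto (slope Fn b₂) (nhdsWithin b₂ (Set.Iio b₂)) (nhds (2 * g b₂)) :=
      hslope.mono_left (nhdsWithin_mono _ (fun y hy => ne_of_lt hy))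
    have h4 : ∀ᶠ y in nhdsWithin b₂ (Set.Iio b₂), slope Fn b₂ y < 0 := by
      refine Filter.eventually_of_mem (Ioo_mem_nhdsLT_of_mem ⟨hb12, le_refl b₂⟩) ?_
      intro y hy
      have hsl : slope Fn b₂ y = Fn y / (y - b₂) := by
        rw [slope_def_field, hFb₂, sub_zero]
      rw [hsl]
      exact div_neg_of_pos_of_neg (hFpos y hy) (sub_neg.mpr hy.2)
    have hle : 2 * g b₂ ≤ 0 := le_of_tendsto h2 (h4.mono fun y hy => hy.le)
    have : g b₂ = 0 := le_antisymm (by linarith) h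
    exact hne this
  -- deriv φ is positive just to the right of x₁
  have hd2x₁ : deriv (deriv φ) x₁ = g b₁ := by rw [hode' x₁, hb₁x]
  have hposnear : ∃ δ > 0, ∀ x ∈ Set.Ioo x₁ (x₁ + δ), 0 < deriv φ x := by
    have hslope : Filter.Tendsto (slope (deriv φ) x₁) (nhdsWithin x₁ {x₁}ᶜ) (nhds (g b₁)) := by
      have := hasDerivAt_iff_tendsto_slope.mp (hD2 x₁)
      rwa [hd2x₁] at this
    have h2 : Filter.Tendsto (slope (deriv φ) x₁) (nhdsWithin x₁ (Set.Ioi x₁)) (nhds (g b₁)) :=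
      hslope.mono_left (nhdsWithin_mono _ (fun y hy => ne_of_gt hy))
    have h3 : {y | 0 < slope (deriv φ) x₁ y} ∈ nhdsWithin x₁ (Set.Ioi x₁) :=
      h2.eventually (lt_mem_nhds hgb₁)
    obtain ⟨u, hu, huss⟩ := mem_nhdsGT_iff_exists_Ioo_subset.mp h3
    refine ⟨u - x₁, by simpa using hu, ?_⟩
    intro x hx
    have hx' : x ∈ Set.Ioo x₁ u := by
      constructor
      · exact hx.1
      · have := hx.2; linarith
    have hsl : 0 < slope (deriv φ) x₁ x := huss hx'
    rw [slope_def_field, hd₁, sub_zero] at hsl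
    have hxpos : 0 < x - x₁ := sub_pos.mpr hx.1
    have := mul_pos hsl hxpos
    rw [div_mul_cancel₀ _ (ne_of_gt hxpos)] at this
    exact this
  obtain ⟨δ, hδpos, hδ⟩ := hposnear
  have hδ'pos : 0 < min δ L / 2 := by
    have := lt_min hδpos hL
    positivity
  set δ' : ℝ := min δ L / 2 with hδ'def
  have hδ'δ : δ' < δ := by
    have h1 : min δ L ≤ δ := min_le_left _ _
    simp only [hδ'def]; linarith
  have hδ'L : δ' < L := by
    have h1 : min δ L ≤ L := min_le_right _ _
    simp only [hδ'def]; linarith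
  -- periodicity of the derivative
  have hperd : ∀ x, deriv φ (x + L) = deriv φ x := by
    intro x
    have hfun : (fun t => φ (t + L)) = φ := funext hper
    calc deriv φ (x + L) = deriv (fun t => φ (t + L)) x := (deriv_comp_add_const φ L x).symm
      _ = deriv φ x := by rw [hfun]
  set T : Set ℝ := Set.Icc (x₁ + δ') (x₁ + L) ∩ {x | deriv φ x = 0} with hTdef
  have hTmem : (x₁ + L) ∈ T := by
    refine ⟨⟨by linarith, le_rfl⟩, ?_⟩
    show deriv φ (x₁ + L) = 0
    rw [hperd x₁, hd₁]
  have hTne : T.Nonempty := ⟨x₁ + L, hTmem⟩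
  have hTbdd : BddBelow T := ⟨x₁ + δ', fun x hx => hx.1.1⟩
  have hTclosed : IsClosed T :=
    IsClosed.inter isClosed_Icc (isClosed_eq hφ'cont continuous_const)
  set x₂ : ℝ := sInf T with hx₂def
  have hx₂T : x₂ ∈ T := hTclosed.csInf_mem hTne hTbdd
  have hx₂ge : x₁ + δ' ≤ x₂ := hx₂T.1.1
  have hx₂leL : x₂ ≤ x₁ + L := hx₂T.1.2
  have hx₁x₂ : x₁ < x₂ := by linarith
  have hd₂x₂ : deriv φ x₂ = 0 := hx₂T.2
  have hnozero : ∀ x ∈ Set.Ioo x₁ x₂, deriv φ x ≠ 0 := by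
    intro x hx h0
    rcases lt_or_ge x (x₁ + δ') with hlt | hge
    · have hxδ : x ∈ Set.Ioo x₁ (x₁ + δ) := ⟨hx.1, by linarith⟩
      exact absurd h0 (ne_of_gt (hδ x hxδ))
    · have hxT : x ∈ T := ⟨⟨hge, by linarith [hx.2]⟩, h0⟩
      have := csInf_le hTbdd hxT
      linarith [hx.2]
  have hderivpos : ∀ x ∈ Set.Ioo x₁ x₂, 0 < deriv φ x := by
    intro x hx
    rcases lt_or_ge 0 (deriv φ x) with h | h
    · exact h
    exfalso
    have hneg : deriv φ x < 0 := lt_of_le_of_ne h (hnozero x hx)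
    have hzI : x₁ + δ' / 2 ∈ Set.Ioo x₁ x₂ := ⟨by linarith, by linarith⟩
    have hz : 0 < deriv φ (x₁ + δ' / 2) := hδ _ ⟨by linarith, by linarith⟩
    have h0m : (0:ℝ) ∈ Set.uIcc (deriv φ x) (deriv φ (x₁ + δ' / 2)) := by
      rw [Set.mem_uIcc]
      left
      exact ⟨hneg.le, hz.le⟩
    obtain ⟨w, hw, hw0⟩ := intermediate_value_uIcc (hφ'cont.continuousOn) h0m
    have hwI : w ∈ Set.Ioo x₁ x₂ := by
      rw [Set.mem_uIcc] at hw
      rcases hw with ⟨h1, h2⟩ | ⟨h1, h2⟩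
      · exact ⟨lt_of_lt_of_le hx.1 h1, lt_of_le_of_lt h2 hzI.2⟩
      · exact ⟨lt_of_lt_of_le hzI.1 h1, lt_of_le_of_lt h2 hx.2⟩
    exact hnozero w hwI hw0
  have hmono : StrictMonoOn φ (Set.Icc x₁ x₂) := by
    apply strictMonoOn_of_deriv_pos (convex_Icc _ _) hcont.continuousOn
    intro x hx
    rw [interior_Icc] at hx
    exact hderivpos x hx
  have hφx₂ : φ x₂ = b₂ := by
    have hF : Fn (φ x₂) = 0 := by rw [← hE' x₂, hd₂x₂]; ring
    have hmem := hrange x₂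
    rcases eq_or_lt_of_le hmem.2 with h | h
    · exact h
    exfalso
    rcases eq_or_lt_of_le hmem.1 with h1 | h1
    · have hlt := hmono (Set.left_mem_Icc.mpr hx₁x₂.le) (Set.right_mem_Icc.mpr hx₁x₂.le) hx₁x₂
      rw [hb₁x] at hlt
      rw [← h1] at hlt
      exact lt_irrefl _ hlt
    · exact (ne_of_gt (hFpos _ ⟨h1, h⟩)) hF
  have hx₂lt : x₂ < x₁ + L := by
    rcases eq_or_lt_of_le hx₂leL with h | h
    · exfalso
      have : φ x₂ = b₁ := by rw [h, hper x₁, hb₁x]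
      rw [hφx₂] at this
      exact (ne_of_gt hb12) this
    · exact h
  -- reflection symmetry about x₂
  have hneg1 : ∀ t : ℝ, HasDerivAt (fun s : ℝ => 2 * x₂ - s) (-1) t := by
    intro t
    simpa [Pi.sub_def] using (hasDerivAt_const t (2 * x₂)).sub (hasDerivAt_id t)
  have hD1' : ∀ t, HasDerivAt (fun s => φ (2 * x₂ - s)) (-(deriv φ (2 * x₂ - t))) t := by
    intro t
    have := (hD1 (2 * x₂ - t)).comp t (hneg1 t)
    simpa [Function.comp_def] using this
  have hD2' : ∀ t, HasDerivAt (fun s => -(deriv φ (2 * x₂ - s))) (G (φ (2 * x₂ - t))) t := by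
    intro t
    have h2 := ((hGode (2 * x₂ - t)).comp t (hneg1 t)).neg
    simpa [Function.comp_def, Pi.neg_def] using h2
  have hrefl : ∀ t, φ t = φ (2 * x₂ - t) := by
    apply huniq _ _ hD1' hD2' x₂
    · rw [show 2 * x₂ - x₂ = x₂ by ring]
    · rw [show 2 * x₂ - x₂ = x₂ by ring, hd₂x₂]
      norm_num
  set x₃ : ℝ := 2 * x₂ - x₁ with hx₃def
  have h2x : 2 * x₂ - x₃ = x₁ := by simp only [hx₃def]; ring
  have hφx₃ : φ x₃ = b₁ := by rw [hrefl x₃, h2x, hb₁x]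
  have hdx₃ : deriv φ x₃ = 0 := by
    have hfeq : φ = fun t => φ (2 * x₂ - t) := funext hrefl
    have h1 : deriv φ x₃ = -(deriv φ (2 * x₂ - x₃)) := by
      conv_lhs => rw [hfeq]
      exact (hD1' x₃).deriv
    rw [h2x, hd₁] at h1
    simpa using h1
  -- translation by x₃ - x₁ is a period
  have hDt1 : ∀ t, HasDerivAt (fun s => φ (s + (x₃ - x₁))) (deriv φ (t + (x₃ - x₁))) t := by
    intro t
    have := (hD1 (t + (x₃ - x₁))).comp t ((hasDerivAt_id t).add_const (x₃ - x₁))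
    simpa [Function.comp_def] using this
  have hDt2 : ∀ t, HasDerivAt (fun s => deriv φ (s + (x₃ - x₁))) (G (φ (t + (x₃ - x₁)))) t := by
    intro t
    have := (hGode (t + (x₃ - x₁))).comp t ((hasDerivAt_id t).add_const (x₃ - x₁))
    simpa [Function.comp_def] using this
  have htrans : ∀ t, φ t = φ (t + (x₃ - x₁)) := by
    apply huniq _ _ hDt1 hDt2 x₁
    · rw [show x₁ + (x₃ - x₁) = x₃ by ring, hφx₃, hb₁x]
    · rw [show x₁ + (x₃ - x₁) = x₃ by ring, hdx₃, hd₁]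
  have hTper : Function.Periodic φ (x₃ - x₁) := fun x => (htrans x).symm
  have hTpos : 0 < x₃ - x₁ := by simp only [hx₃def]; linarith
  have hLT : L ≤ x₃ - x₁ := hmin _ hTpos hTper
  have hTlt2L : x₃ - x₁ < 2 * L := by simp only [hx₃def]; linarith
  have hTeqL : x₃ - x₁ = L := by
    rcases eq_or_lt_of_le hLT with h | h
    · exact h.symm
    exfalso
    have hper2 : Function.Periodic φ (x₃ - x₁ - L) := hTper.sub_period hper
    have := hmin _ (by linarith) hper2
    linarith
  have hhalf : x₂ - x₁ = L / 2 := by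
    simp only [hx₃def] at hTeqL
    linarith
  -- change of variables
  have hsmeas : MeasurableSet (Set.Ioo x₁ x₂) := measurableSet_Ioo
  have hderivwithin : ∀ x ∈ Set.Ioo x₁ x₂, HasDerivWithinAt φ (deriv φ x) (Set.Ioo x₁ x₂) x :=
    fun x _ => (hD1 x).hasDerivWithinAt
  have hinj : Set.InjOn φ (Set.Ioo x₁ x₂) := (hmono.injOn).mono Set.Ioo_subset_Icc_self
  have himg : φ '' Set.Ioo x₁ x₂ = Set.Ioo b₁ b₂ := by
    apply Set.Subset.antisymm
    · rintro _ ⟨x, hx, rfl⟩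
      constructor
      · rw [← hb₁x]
        exact hmono (Set.left_mem_Icc.mpr hx₁x₂.le) (Set.Ioo_subset_Icc_self hx) hx.1
      · rw [← hφx₂]
        exact hmono (Set.Ioo_subset_Icc_self hx) (Set.right_mem_Icc.mpr hx₁x₂.le) hx.2
    · have := intermediate_value_Ioo hx₁x₂.le hcont.continuousOn
      rw [hb₁x, hφx₂] at this
      exact this
  set gfun : ℝ → ℝ := fun h => 1 / Real.sqrt (Fn h) with hgfundef
  have hEqOn : Set.EqOn (fun x => |deriv φ x| • gfun (φ x)) (fun _ => (1:ℝ)) (Set.Ioo x₁ x₂) := by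
    intro x hx
    have hpos' := hderivpos x hx
    have hFx : Fn (φ x) = (deriv φ x)^2 := (hE' x).symm
    simp only [hgfundef, smul_eq_mul]
    rw [hFx, Real.sqrt_sq hpos'.le, abs_of_pos hpos']
    field_simp
  have hconst1 : IntegrableOn (fun _ : ℝ => (1:ℝ)) (Set.Ioo x₁ x₂) := by
    apply (integrableOn_const_iff (C := (1:ℝ)) (by simp)).mpr
    right
    rw [Real.volume_Ioo]
    exact ENNReal.ofReal_lt_top
  have hint1 : IntegrableOn (fun x => |deriv φ x| • gfun (φ x)) (Set.Ioo x₁ x₂) :=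
    hconst1.congr_fun (fun x hx => (hEqOn hx).symm) hsmeas
  have hintg : IntegrableOn gfun (Set.Ioo b₁ b₂) := by
    rw [← himg]
    exact (integrableOn_image_iff_integrableOn_abs_deriv_smul hsmeas hderivwithin hinj gfun).mpr hint1
  have hintval : (∫ h in Set.Ioo b₁ b₂, gfun h) = x₂ - x₁ := by
    rw [← himg, integral_image_eq_integral_abs_deriv_smul hsmeas hderivwithin hinj gfun,
      setIntegral_congr_fun hsmeas hEqOn]
    simp [Real.volume_Ioo, ENNReal.toReal_ofReal (by linarith : (0:ℝ) ≤ x₂ - x₁), hx₁x₂.le]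
  refine ⟨hintg, ?_⟩
  show L = 2 * ∫ h in Set.Ioo b₁ b₂, gfun h
  rw [hintval]
  linarith
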